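/- Let ABCD have isogonal cubic 𝒞 (the locus of points X with (XA,XC),(XB,XD) isogonal). If (X,X') and (Y,Y') are two pairs of isogonal conjugates in ABCD, then A and C are isogonal conjugates in the quadrilateral XYX'Y'. -/

import Mathlib

open Complex ComplexConjugate

/-- `p` and `q` are isogonal conjugates in the quadrilateral `v₁v₂v₃v₄`: at each vertex
the pair of lines to `p, q` and the pair of adjacent sides are isogonal. -/
def IsogConjIn (v₁ v₂ v₃ v₄ p q : ℂ) : Prop :=
  ((p - v₁) * (q - v₁) * conj ((v₂ - v₁) * (v₄ - v₁))).im = 0 ∧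
  ((p - v₂) * (q - v₂) * conj ((v₁ - v₂) * (v₃ - v₂))).im = 0 ∧
  ((p - v₃) * (q - v₃) * conj ((v₂ - v₃) * (v₄ - v₃))).im = 0 ∧
  ((p - v₄) * (q - v₄) * conj ((v₃ - v₄) * (v₁ - v₄))).im = 0

private lemma imz {z w : ℂ} (h : z = w) (hw : w.im = 0) : z.im = 0 := by rw [h]; exact hw

private lemma im_self (z : ℂ) : (z * conj z).im = 0 := by
  rw [Complex.mul_conj]; exact Complex.ofReal_im _

private lemma im_swap (z w : ℂ) (h : (z * conj w).im = 0) : (w * conj z).im = 0 := by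
  have h2 : w * conj z = conj (z * conj w) := by
    simp only [map_mul, Complex.conj_conj]; ring
  rw [h2, Complex.conj_im, h, neg_zero]

private lemma csub_ne {z w : ℂ} (h : z ≠ w) : conj z - conj w ≠ 0 :=
  sub_ne_zero.mpr fun hh => h ((starRingEnd ℂ).injective hh)

private lemma cancel2 {u z : ℂ} (hu : u ≠ 0) (h : u * z = 0) : z = 0 := by
  rcases mul_eq_zero.mp h with h' | h'
  · exact absurd h' hu
  · exact h'

private lemma collin4 (p₀ p₁ p₂ p₃ t : ℂ) (ht : t ≠ 0)
    (h1 : ((p₁ - p₀) * t).im = 0) (h2 : ((p₂ - p₀) * t).im = 0)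
    (h3 : ((p₃ - p₀) * t).im = 0) :
    Collinear ℝ ({p₀, p₁, p₂, p₃} : Set ℂ) := by
  rw [collinear_iff_of_mem (show p₀ ∈ ({p₀, p₁, p₂, p₃} : Set ℂ) by simp)]
  refine ⟨t⁻¹, ?_⟩
  have keyf : ∀ z : ℂ, ((z - p₀) * t).im = 0 → ∃ r : ℝ, z = r • t⁻¹ +ᵥ p₀ := by
    intro z hz
    refine ⟨((z - p₀) * t).re, ?_⟩
    have hz' : ((z - p₀) * t) = ((((z - p₀) * t).re : ℝ) : ℂ) := by
      apply Complex.ext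
      · simp
      · simp [hz]
    have hvadd : ((((z - p₀) * t).re : ℝ)) • t⁻¹ +ᵥ p₀ = ((((z - p₀) * t).re : ℝ) : ℂ) * t⁻¹ + p₀ := by
      rw [Complex.real_smul]; rfl
    rw [hvadd, ← hz']
    field_simp
    ring
  intro z hz
  simp only [Set.mem_insert_iff, Set.mem_singleton_iff] at hz
  rcases hz with rfl | rfl | rfl | rfl
  · exact ⟨0, by simp⟩
  · exact keyf _ h1
  · exact keyf _ h2
  · exact keyf _ h3

set_option maxHeartbeats 1600000 in
private lemma keycore (b c d p q r B C D P Q R : ℂ)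
    (h1 : (P * Q * (b * d)) = (p * q * (B * D))) (h2 : ((P - B) * (Q - B) * ((-b) * (c - b))) = ((p - b) * (q - b) * ((-B) * (C - B))))
    (h3 : ((P - C) * (Q - C) * ((b - c) * (d - c))) = ((p - c) * (q - c) * ((B - C) * (D - C)))) (h4 : ((P - D) * (Q - D) * ((c - d) * (-d))) = ((p - d) * (q - d) * ((C - D) * (-D))))
    (hcp : (P * (P - C) * ((p - b) * (p - d))) = (p * (p - c) * ((P - B) * (P - D))))
    (hcr : (R * (R - C) * ((r - b) * (r - d))) = (r * (r - c) * ((R - B) * (R - D)))) :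
    ((((p * (B * D)) * ((P - B) * ((-b) * (c - b)))) - (((p - b) * ((-B) * (C - B))) * (P * (b * d)))) = 0 ∧ (((p * (B * D)) * ((P - D) * ((c - d) * (-d)))) - (((p - d) * ((C - D) * (-D))) * (P * (b * d)))) = 0 ∧ ((((p - b) * ((-B) * (C - B))) * ((P - C) * ((b - c) * (d - c)))) - (((p - c) * ((B - C) * (D - C))) * ((P - B) * ((-b) * (c - b))))) = 0) ∨ (((p - r) * (q - r) * ((-R) * (C - R))) - ((P - R) * (Q - R) * ((-r) * (c - r)))) = 0 := by
  by_cases hD1 : (((p * (B * D)) * ((P - B) * ((-b) * (c - b)))) - (((p - b) * ((-B) * (C - B))) * (P * (b * d)))) = 0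
  · by_cases hD2 : (((p * (B * D)) * ((P - D) * ((c - d) * (-d)))) - (((p - d) * ((C - D) * (-D))) * (P * (b * d)))) = 0
    · by_cases hD3 : ((((p - b) * ((-B) * (C - B))) * ((P - C) * ((b - c) * (d - c)))) - (((p - c) * ((B - C) * (D - C))) * ((P - B) * ((-b) * (c - b))))) = 0
      · exact Or.inl ⟨hD1, hD2, hD3⟩
      · right
        have hE : (((((p - b) * ((-B) * (C - B))) * ((((P - C) * ((b - c) * (d - c))) * ((r * ((p - r) * ((-R) * (C - R)))) - (R * ((P - R) * ((-r) * (c - r)))))) - (((P - R) * ((-r) * (c - r))) * ((c * ((p - c) * ((B - C) * (D - C)))) - (C * ((P - C) * ((b - c) * (d - c)))))))) - (((P - B) * ((-b) * (c - b))) * ((((p - c) * ((B - C) * (D - C))) * ((r * ((p - r) * ((-R) * (C - R)))) - (R * ((P - R) * ((-r) * (c - r)))))) - (((p - r) * ((-R) * (C - R))) * ((c * ((p - c) * ((B - C) * (D - C)))) - (C * ((P - C) * ((b - c) * (d - c))))))))) + (((b * ((p - b) * ((-B) * (C - B)))) - (B * ((P - B) * ((-b) * (c - b))))) * ((((p - c)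 * ((B - C) * (D - C))) * ((P - R) * ((-r) * (c - r)))) - (((p - r) * ((-R) * (C - R))) * ((P - C) * ((b - c) * (d - c))))))) = 0 := by
          linear_combination (-((b - c) * (B - C) * (c - r) * (C - R) * ((b * R) - (B * r)))) * hcp + (-((b - c) * (B - C) * (c - p) * (C - P) * (((b - p) * (-P)) - ((B - P) * (-p))))) * hcr
        have hkey : ((((p - b) * ((-B) * (C - B))) * ((P - C) * ((b - c) * (d - c)))) - (((p - c) * ((B - C) * (D - C))) * ((P - B) * ((-b) * (c - b))))) * (((p - r) * (q - r) * ((-R) * (C - R))) - ((P - R) * (Q - R) * ((-r) * (c - r)))) = 0 := by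
          linear_combination ((((p - c) * ((B - C) * (D - C))) * ((P - R) * ((-r) * (c - r)))) - (((p - r) * ((-R) * (C - R))) * ((P - C) * ((b - c) * (d - c))))) * h2 + (-((((p - b) * ((-B) * (C - B))) * ((P - R) * ((-r) * (c - r)))) - (((p - r) * ((-R) * (C - R))) * ((P - B) * ((-b) * (c - b)))))) * h3 + (-1 : ℂ) * hE
        rcases mul_eq_zero.mp hkey with h | h
        · exact absurd h hD3
        · exact h
    · right
      have hE : ((((p * (B * D)) * ((((P - D) * ((c - d) * (-d))) * ((r * ((p - r) * ((-R) * (C - R)))) - (R * ((P - R) * ((-r) * (c - r)))))) - (((P - R) * ((-r) * (c - r))) * ((d * ((p - d) * ((C - D) * (-D)))) - (D * ((P - D) * ((c - d) * (-d)))))))) - ((P * (b * d)) * ((((p - d) * ((C - D) * (-D))) * ((r * ((p - r) * ((-R) * (C - R)))) - (R * ((P - R) * ((-r) * (c - r)))))) - (((p - r) * ((-R) * (C - R))) * ((d * ((p - d) * ((C - D) * (-D)))) - (D * ((P - D) * ((c - d) * (-d))))))))) + (0 * ((((p - d) * ((C - D) * (-D))) * ((P - R) * ((-r) * (c - r))))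 - (((p - r) * ((-R) * (C - R))) * ((P - D) * ((c - d) * (-d))))))) = 0 := by
        linear_combination ((-d) * (-D) * (-r) * (-R) * (((d - c) * (R - C)) - ((D - C) * (r - c)))) * hcp + ((-d) * (-D) * (-p) * (-P) * (((d - p) * (C - P)) - ((D - P) * (c - p)))) * hcr
      have hkey : (((p * (B * D)) * ((P - D) * ((c - d) * (-d)))) - (((p - d) * ((C - D) * (-D))) * (P * (b * d)))) * (((p - r) * (q - r) * ((-R) * (C - R))) - ((P - R) * (Q - R) * ((-r) * (c - r)))) = 0 := by
        linear_combination ((((p - d) * ((C - D) * (-D))) * ((P - R) * ((-r) * (c - r)))) - (((p - r) * ((-R) * (C - R))) * ((P - D) * ((c - d) * (-d))))) * h1 + (-(((p * (B * D)) * ((P - R) * ((-r) * (c - r)))) - (((p - r) * ((-R) * (C - R))) * (P * (b * d))))) * h4 + (-1 : ℂ) * hE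
      rcases mul_eq_zero.mp hkey with h | h
      · exact absurd h hD2
      · exact h
  · right
    have hE : ((((p * (B * D)) * ((((P - B) * ((-b) * (c - b))) * ((r * ((p - r) * ((-R) * (C - R)))) - (R * ((P - R) * ((-r) * (c - r)))))) - (((P - R) * ((-r) * (c - r))) * ((b * ((p - b) * ((-B) * (C - B)))) - (B * ((P - B) * ((-b) * (c - b)))))))) - ((P * (b * d)) * ((((p - b) * ((-B) * (C - B))) * ((r * ((p - r) * ((-R) * (C - R)))) - (R * ((P - R) * ((-r) * (c - r)))))) - (((p - r) * ((-R) * (C - R))) * ((b * ((p - b) * ((-B) * (C - B)))) - (B * ((P - B) * ((-b) * (c - b))))))))) + (0 * ((((p - b) * ((-B) * (C - B))) * ((P - R) * ((-r) * (c - r)))) - (((p - r) * ((-R) * (C - R))) * ((P - B) * ((-b) * (c - b))))))) = 0 := by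
      linear_combination (-((-b) * (-B) * (-r) * (-R) * (((c - b) * (R - B)) - ((C - B) * (r - b))))) * hcp + (-((-b) * (-B) * (-p) * (-P) * (((c - p) * (B - P)) - ((C - P) * (b - p))))) * hcr
    have hkey : (((p * (B * D)) * ((P - B) * ((-b) * (c - b)))) - (((p - b) * ((-B) * (C - B))) * (P * (b * d)))) * (((p - r) * (q - r) * ((-R) * (C - R))) - ((P - R) * (Q - R) * ((-r) * (c - r)))) = 0 := by
      linear_combination ((((p - b) * ((-B) * (C - B))) * ((P - R) * ((-r) * (c - r)))) - (((p - r) * ((-R) * (C - R))) * ((P - B) * ((-b) * (c - b))))) * h1 + (-(((p * (B * D)) * ((P - R) * ((-r) * (c - r)))) - (((p - r) * ((-R) * (C - R))) * (P * (b * d))))) * h2 + (-1 : ℂ) * hE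
    rcases mul_eq_zero.mp hkey with h | h
    · exact absurd h hD1
    · exact h

set_option maxHeartbeats 1600000 in
private lemma fallbackcore (b c d p q B C D P Q : ℂ)
    (htb : ((p - b) * ((-B) * (C - B))) ≠ 0) (htbc : ((P - B) * ((-b) * (c - b))) ≠ 0)
    (htc : ((p - c) * ((B - C) * (D - C))) ≠ 0) (htcc : ((P - C) * ((b - c) * (d - c))) ≠ 0)
    (htd : ((p - d) * ((C - D) * (-D))) ≠ 0) (htdc : ((P - D) * ((c - d) * (-d))) ≠ 0)
    (h1 : (P * Q * (b * d)) = (p * q * (B * D))) (h2 : ((P - B) * (Q - B) * ((-b) * (c - b))) = ((p - b) * (q - b) * ((-B) * (C - B))))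
    (h3 : ((P - C) * (Q - C) * ((b - c) * (d - c))) = ((p - c) * (q - c) * ((B - C) * (D - C)))) (h4 : ((P - D) * (Q - D) * ((c - d) * (-d))) = ((p - d) * (q - d) * ((C - D) * (-D))))
    (hD1 : (((p * (B * D)) * ((P - B) * ((-b) * (c - b)))) - (((p - b) * ((-B) * (C - B))) * (P * (b * d)))) = 0) (hD2 : (((p * (B * D)) * ((P - D) * ((c - d) * (-d)))) - (((p - d) * ((C - D) * (-D))) * (P * (b * d)))) = 0) (hD3 : ((((p - b) * ((-B) * (C - B))) * ((P - C) * ((b - c) * (d - c)))) - (((p - c) * ((B - C) * (D - C))) * ((P - B) * ((-b) * (c - b))))) = 0) :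
    ((B * (P * (b * d))) - (b * (p * (B * D)))) = 0 ∧ ((C * (P * (b * d))) - (c * (p * (B * D)))) = 0 ∧ ((D * (P * (b * d))) - (d * (p * (B * D)))) = 0 := by
  have e_ba : ((B * (P * (b * d))) - (b * (p * (B * D)))) = 0 :=
    cancel2 (mul_ne_zero htb htbc) (by linear_combination (((p - b) * ((-B) * (C - B))) * ((P - B) * ((-b) * (c - b)))) * h1 + (-(((p - b) * ((-B) * (C - B))) * (P * (b * d)))) * h2 + ((q - b) * ((p - b) * ((-B) * (C - B)))) * hD1)
  have e_da : ((D * (P * (b * d))) - (d * (p * (B * D)))) = 0 :=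
    cancel2 (mul_ne_zero htd htdc) (by linear_combination (((p - d) * ((C - D) * (-D))) * ((P - D) * ((c - d) * (-d)))) * h1 + (-(((p - d) * ((C - D) * (-D))) * (P * (b * d)))) * h4 + ((q - d) * ((p - d) * ((C - D) * (-D)))) * hD2)
  have e_cb : (((C - B) * ((P - B) * ((-b) * (c - b)))) - ((c - b) * ((p - b) * ((-B) * (C - B))))) = 0 :=
    cancel2 (mul_ne_zero htc htcc) (by linear_combination (((p - c) * ((B - C) * (D - C))) * ((P - C) * ((b - c) * (d - c)))) * h2 + (-(((p - c) * ((B - C) * (D - C))) * ((P - B) * ((-b) * (c - b))))) * h3 + ((q - c) * ((p - c) * ((B - C) * (D - C)))) * hD3)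
  have e_cba : (((C - B) * (P * (b * d))) - ((c - b) * (p * (B * D)))) = 0 :=
    cancel2 (mul_ne_zero htb htbc) (by linear_combination (((p - b) * ((-B) * (C - B))) * (P * (b * d))) * e_cb + (-((c - b) * ((p - b) * ((-B) * (C - B))))) * hD1)
  exact ⟨e_ba, by linear_combination e_cba + e_ba, e_da⟩

set_option maxHeartbeats 1600000 in
private lemma cubiccore (b c d p q B C D P Q : ℂ)
    (nd : (-d : ℂ) ≠ 0) (nD : (-D : ℂ) ≠ 0) (ncd : c - d ≠ 0) (nCD : C - D ≠ 0)
    (nbc : b - c ≠ 0) (nBC : B - C ≠ 0)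
    (h1 : (P * Q * (b * d)) = (p * q * (B * D))) (h2 : ((P - B) * (Q - B) * ((-b) * (c - b))) = ((p - b) * (q - b) * ((-B) * (C - B))))
    (h3 : ((P - C) * (Q - C) * ((b - c) * (d - c))) = ((p - c) * (q - c) * ((B - C) * (D - C)))) (h4 : ((P - D) * (Q - D) * ((c - d) * (-d))) = ((p - d) * (q - d) * ((C - D) * (-D)))) :
    ((((b - c) * (-C)) - ((B - C) * (-c))) = 0 ∧ (((b - d) * (-D)) - ((B - D) * (-d))) = 0) ∨ ((P * (P - C) * ((p - b) * (p - d))) - (p * (p - c) * ((P - B) * (P - D)))) = 0 := by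
  by_cases hK1 : (((b - c) * (-C)) - ((B - C) * (-c))) = 0
  · by_cases hK2 : (((b - d) * (-D)) - ((B - D) * (-d))) = 0
    · exact Or.inl ⟨hK1, hK2⟩
    · right
      have hMul : ((b - c) * (B - C) * (c - d) * (C - D) * (((b - d) * (-D)) - ((B - D) * (-d)))) * ((P * (P - C) * ((p - b) * (p - d))) - (p * (p - c) * ((P - B) * (P - D)))) = 0 := by
        linear_combination ((((p - c) * ((B - C) * (D - C))) * ((P - D) * ((c - d) * (-d)))) - (((P - C) * ((b - c) * (d - c))) * ((p - d) * ((C - D) * (-D))))) * h2 + (-((((p - b) * ((-B) * (C - B))) * ((P - D) * ((c - d) * (-d)))) - (((P - B) * ((-b) * (c - b))) * ((p - d) * ((C - D) * (-D)))))) * h3 + ((((p - b) * ((-B) * (C - B))) * ((P - C) * ((b - c) * (d - c)))) - (((P - B) * ((-b) * (c - b))) * ((p - c) * ((B - C) * (D - C))))) * h4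
      exact cancel2 (mul_ne_zero (mul_ne_zero (mul_ne_zero (mul_ne_zero
        nbc nBC) ncd) nCD) hK2) hMul
  · right
    have hMul : ((-d) * (-D) * (c - d) * (C - D) * (((b - c) * (-C)) - ((B - C) * (-c)))) * ((P * (P - C) * ((p - b) * (p - d))) - (p * (p - c) * ((P - B) * (P - D)))) = 0 := by
      linear_combination (-((((p - c) * ((B - C) * (D - C))) * ((P - D) * ((c - d) * (-d)))) - (((P - C) * ((b - c) * (d - c))) * ((p - d) * ((C - D) * (-D)))))) * h1 + (-(-(((p * (B * D)) * ((P - D) * ((c - d) * (-d)))) - ((P * (b * d)) * ((p - d) * ((C - D) * (-D))))))) * h3 + (-(((p * (B * D)) * ((P - C) * ((b - c) * (d - c)))) - ((P * (b * d)) * ((p - c) * ((B - C) * (D - C)))))) * h4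
    exact cancel2 (mul_ne_zero (mul_ne_zero (mul_ne_zero (mul_ne_zero
      nd nD) ncd) nCD) hK1) hMul

private lemma vertexconj (a b c d q : ℂ) (hab : a ≠ b) (had : a ≠ d) (hbc : b ≠ c) (hcd : c ≠ d)
    (hncol : ¬ Collinear ℝ ({a, b, c, d} : Set ℂ))
    (h2 : ((a - b) * (q - b) * conj ((a - b) * (c - b))).im = 0)
    (h3 : ((a - c) * (q - c) * conj ((b - c) * (d - c))).im = 0)
    (h4 : ((a - d) * (q - d) * conj ((c - d) * (a - d))).im = 0) : q = c := by
  by_cases hqc : q = c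
  · exact hqc
  exfalso
  rw [← Complex.conj_eq_iff_im] at h2 h3 h4
  simp only [map_mul, map_sub, Complex.conj_conj] at h2 h3 h4
  have hr1 : (((q - c) * (conj c - conj b)) - ((conj q - conj c) * (c - b))) = 0 :=
    cancel2 (mul_ne_zero (sub_ne_zero.mpr hab) (csub_ne hab))
      (by linear_combination (-1 : ℂ) * h2)
  have hr2 : (((q - c) * (conj c - conj d)) - ((conj q - conj c) * (c - d))) = 0 :=
    cancel2 (mul_ne_zero (sub_ne_zero.mpr had) (csub_ne had))
      (by linear_combination (-1 : ℂ) * h4)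
  have hK : (((conj c - conj b) * (c - d)) - ((conj c - conj d) * (c - b))) = 0 :=
    cancel2 (sub_ne_zero.mpr hqc) (by linear_combination (c - d) * hr1 + (-(c - b)) * hr2)
  have hKacd : (((a - c) * (conj d - conj c)) - ((conj a - conj c) * (d - c))) = 0 :=
    cancel2 (mul_ne_zero (mul_ne_zero (sub_ne_zero.mpr hqc) (csub_ne (Ne.symm hbc)))
      (sub_ne_zero.mpr (Ne.symm hbc))) (by linear_combination (c - b) * h3 + ((conj a - conj c) * (b - c) * (d - c)) * hr1)
  have hcol : Collinear ℝ ({c, a, b, d} : Set ℂ) := by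
    refine collin4 c a b d (conj d - conj c) (csub_ne (Ne.symm hcd)) ?_ ?_ ?_
    · rw [← Complex.conj_eq_iff_im]
      simp only [map_mul, map_sub, Complex.conj_conj]
      linear_combination (-1 : ℂ) * hKacd
    · rw [← Complex.conj_eq_iff_im]
      simp only [map_mul, map_sub, Complex.conj_conj]
      linear_combination hK
    · exact imz (by simp only [map_sub]) (im_self (d - c))
  have hset : ({c, a, b, d} : Set ℂ) = ({a, b, c, d} : Set ℂ) := by
    ext z; simp only [Set.mem_insert_iff, Set.mem_singleton_iff]; tauto
  rw [hset] at hcol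
  exact hncol hcol

set_option maxHeartbeats 1600000 in
private lemma onCubic (a b c d p q : ℂ) (hab : a ≠ b) (hbc : b ≠ c) (hcd : c ≠ d) (had : a ≠ d)
    (hncol : ¬ Collinear ℝ ({a, b, c, d} : Set ℂ))
    (h1 : ((p - a) * (q - a) * conj ((b - a) * (d - a))).im = 0)
    (h2 : ((p - b) * (q - b) * conj ((a - b) * (c - b))).im = 0)
    (h3 : ((p - c) * (q - c) * conj ((b - c) * (d - c))).im = 0)
    (h4 : ((p - d) * (q - d) * conj ((c - d) * (a - d))).im = 0) :
    ((p - a) * (p - c) * conj ((p - b) * (p - d))).im = 0 := by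
  rw [← Complex.conj_eq_iff_im] at h1 h2 h3 h4 ⊢
  simp only [map_mul, map_sub, Complex.conj_conj] at h1 h2 h3 h4 ⊢
  rcases cubiccore (b - a) (c - a) (d - a) (p - a) (q - a)
      (conj b - conj a) (conj c - conj a) (conj d - conj a) (conj p - conj a) (conj q - conj a)
      (fun h => had (by linear_combination h))
      (fun h => had ((starRingEnd ℂ).injective (show conj a = conj d from by linear_combination h)))
      (fun h => hcd (by linear_combination h))
      (fun h => hcd ((starRingEnd ℂ).injective (show conj c = conj d from by linear_combination h)))
      (fun h => hbc (by linear_combination h))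
      (fun h => hbc ((starRingEnd ℂ).injective (show conj b = conj c from by linear_combination h)))
      (by linear_combination h1) (by linear_combination h2) (by linear_combination h3)
      (by linear_combination h4) with ⟨hK1, hK2⟩ | hCp
  · exfalso
    have hcol : Collinear ℝ ({a, b, c, d} : Set ℂ) := by
      refine collin4 a b c d (conj b - conj a) (csub_ne (Ne.symm hab)) ?_ ?_ ?_
      · exact imz (by simp only [map_sub]) (im_self (b - a))
      · rw [← Complex.conj_eq_iff_im]
        simp only [map_mul, map_sub, Complex.conj_conj]
        linear_combination (-1 : ℂ) * hK1
      · rw [← Complex.conj_eq_iff_im]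
        simp only [map_mul, map_sub, Complex.conj_conj]
        linear_combination (-1 : ℂ) * hK2
    exact hncol hcol
  · linear_combination hCp

set_option maxHeartbeats 1600000 in
private lemma key (a b c d p q r : ℂ) (hab : a ≠ b) (hbc : b ≠ c) (hcd : c ≠ d) (had : a ≠ d)
    (hncol : ¬ Collinear ℝ ({a, b, c, d} : Set ℂ))
    (hpa : p ≠ a) (hpb : p ≠ b) (hpc : p ≠ c) (hpd : p ≠ d)
    (h1 : ((p - a) * (q - a) * conj ((b - a) * (d - a))).im = 0)
    (h2 : ((p - b) * (q - b) * conj ((a - b) * (c - b))).im = 0)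
    (h3 : ((p - c) * (q - c) * conj ((b - c) * (d - c))).im = 0)
    (h4 : ((p - d) * (q - d) * conj ((c - d) * (a - d))).im = 0)
    (hcp : ((p - a) * (p - c) * conj ((p - b) * (p - d))).im = 0)
    (hcr : ((r - a) * (r - c) * conj ((r - b) * (r - d))).im = 0) :
    ((a - r) * (c - r) * conj ((p - r) * (q - r))).im = 0 := by
  rw [← Complex.conj_eq_iff_im] at h1 h2 h3 h4 hcp hcr ⊢
  simp only [map_mul, map_sub, Complex.conj_conj] at h1 h2 h3 h4 hcp hcr ⊢
  rcases keycore (b - a) (c - a) (d - a) (p - a) (q - a) (r - a)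
      (conj b - conj a) (conj c - conj a) (conj d - conj a)
      (conj p - conj a) (conj q - conj a) (conj r - conj a)
      (by linear_combination h1) (by linear_combination h2) (by linear_combination h3)
      (by linear_combination h4) (by linear_combination hcp) (by linear_combination hcr) with
    ⟨hD1, hD2, hD3⟩ | hG
  · exfalso
    have htb : ((p - a) - (b - a)) * ((-(conj b - conj a)) * ((conj c - conj a) - (conj b - conj a))) ≠ 0 := by
      refine mul_ne_zero (fun h => hpb (by linear_combination h)) (mul_ne_zero ?_ ?_)
      · exact fun h => hab ((starRingEnd ℂ).injective (show conj a = conj b from by linear_combination h))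
      · exact fun h => hbc ((starRingEnd ℂ).injective (show conj b = conj c from by linear_combination (-1 : ℂ) * h))
    have htbc : ((conj p - conj a) - (conj b - conj a)) * ((-(b - a)) * ((c - a) - (b - a))) ≠ 0 := by
      refine mul_ne_zero (fun h => hpb ((starRingEnd ℂ).injective (show conj p = conj b from by linear_combination h))) (mul_ne_zero ?_ ?_)
      · exact fun h => hab (by linear_combination h)
      · exact fun h => hbc (by linear_combination (-1 : ℂ) * h)
    have htc : ((p - a) - (c - a)) * (((conj b - conj a) - (conj c - conj a)) * ((conj d - conj a) - (conj c - conj a))) ≠ 0 := by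
      refine mul_ne_zero (fun h => hpc (by linear_combination h)) (mul_ne_zero ?_ ?_)
      · exact fun h => hbc ((starRingEnd ℂ).injective (show conj b = conj c from by linear_combination h))
      · exact fun h => hcd ((starRingEnd ℂ).injective (show conj c = conj d from by linear_combination (-1 : ℂ) * h))
    have htcc : ((conj p - conj a) - (conj c - conj a)) * (((b - a) - (c - a)) * ((d - a) - (c - a))) ≠ 0 := by
      refine mul_ne_zero (fun h => hpc ((starRingEnd ℂ).injective (show conj p = conj c from by linear_combination h))) (mul_ne_zero ?_ ?_)
      · exact fun h => hbc (by linear_combination h)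
      · exact fun h => hcd (by linear_combination (-1 : ℂ) * h)
    have htd : ((p - a) - (d - a)) * (((conj c - conj a) - (conj d - conj a)) * (-(conj d - conj a))) ≠ 0 := by
      refine mul_ne_zero (fun h => hpd (by linear_combination h)) (mul_ne_zero ?_ ?_)
      · exact fun h => hcd ((starRingEnd ℂ).injective (show conj c = conj d from by linear_combination h))
      · exact fun h => had ((starRingEnd ℂ).injective (show conj a = conj d from by linear_combination h))
    have htdc : ((conj p - conj a) - (conj d - conj a)) * (((c - a) - (d - a)) * (-(d - a))) ≠ 0 := by
      refine mul_ne_zero (fun h => hpd ((starRingEnd ℂ).injective (show conj p = conj d from by linear_combination h))) (mul_ne_zero ?_ ?_)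
      · exact fun h => hcd (by linear_combination h)
      · exact fun h => had (by linear_combination h)
    obtain ⟨e_ba, e_ca, e_da⟩ := fallbackcore (b - a) (c - a) (d - a) (p - a) (q - a)
      (conj b - conj a) (conj c - conj a) (conj d - conj a) (conj p - conj a) (conj q - conj a)
      htb htbc htc htcc htd htdc
      (by linear_combination h1) (by linear_combination h2) (by linear_combination h3)
      (by linear_combination h4) hD1 hD2 hD3
    have hta : (p - a) * ((conj b - conj a) * (conj d - conj a)) ≠ 0 :=
      mul_ne_zero (sub_ne_zero.mpr hpa) (mul_ne_zero (csub_ne (Ne.symm hab)) (csub_ne (Ne.symm had)))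
    have hcol : Collinear ℝ ({a, b, c, d} : Set ℂ) := by
      refine collin4 a b c d ((p - a) * ((conj b - conj a) * (conj d - conj a))) hta ?_ ?_ ?_
      · rw [← Complex.conj_eq_iff_im]
        simp only [map_mul, map_sub, Complex.conj_conj]
        linear_combination e_ba
      · rw [← Complex.conj_eq_iff_im]
        simp only [map_mul, map_sub, Complex.conj_conj]
        linear_combination e_ca
      · rw [← Complex.conj_eq_iff_im]
        simp only [map_mul, map_sub, Complex.conj_conj]
        linear_combination e_da
    exact hncol hcol
  · linear_combination hG

set_option maxHeartbeats 1600000 in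
/-- if `(x, x')` and `(y, y')` are two pairs of isogonal conjugates in a
nondegenerate quadrilateral `abcd`, then `a` and `c` are isogonal conjugates in the
quadrilateral `x y x' y'`. -/
theorem reversal (a b c d x x' y y' : ℂ)
    (hab : a ≠ b) (hac : a ≠ c) (had : a ≠ d) (hbc : b ≠ c) (hbd : b ≠ d) (hcd : c ≠ d)
    (hnp : a + c ≠ b + d) (hncol : ¬ Collinear ℝ ({a, b, c, d} : Set ℂ))
    (hxx' : x ≠ x') (hyy' : y ≠ y') (hxy : x ≠ y) (hxy' : x ≠ y')
    (hx'y : x' ≠ y) (hx'y' : x' ≠ y')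
    (hx : IsogConjIn a b c d x x') (hy : IsogConjIn a b c d y y') :
    IsogConjIn x y x' y' a c := by
  obtain ⟨hx1, hx2, hx3, hx4⟩ := hx
  obtain ⟨hy1, hy2, hy3, hy4⟩ := hy
  have hncol2 : ¬ Collinear ℝ ({b, c, d, a} : Set ℂ) := by
    rw [show ({b, c, d, a} : Set ℂ) = ({a, b, c, d} : Set ℂ) by
      ext z; simp only [Set.mem_insert_iff, Set.mem_singleton_iff]; tauto]
    exact hncol
  have hncol3 : ¬ Collinear ℝ ({c, d, a, b} : Set ℂ) := by
    rw [show ({c, d, a, b} : Set ℂ) = ({a, b, c, d} : Set ℂ) by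
      ext z; simp only [Set.mem_insert_iff, Set.mem_singleton_iff]; tauto]
    exact hncol
  have hncol4 : ¬ Collinear ℝ ({d, a, b, c} : Set ℂ) := by
    rw [show ({d, a, b, c} : Set ℂ) = ({a, b, c, d} : Set ℂ) by
      ext z; simp only [Set.mem_insert_iff, Set.mem_singleton_iff]; tauto]
    exact hncol
  by_cases hxa2 : x = a
  · have hs : a = x := hxa2.symm
    subst hs
    have hx'c : x' = c := vertexconj a b c d x' hab had hbc hcd hncol hx2 hx3 hx4
    have hs2 : c = x' := hx'c.symm
    subst hs2
    exact ⟨by simp, im_self ((a - y) * (c - y)), by simp,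
      imz (by rw [show ((c - y') * (a - y') : ℂ) = (a - y') * (c - y') from by ring])
        (im_self ((a - y') * (c - y')))⟩
  by_cases hxb2 : x = b
  · have hs : b = x := hxb2.symm
    subst hs
    have hx'd : x' = d := vertexconj b c d a x' hbc (Ne.symm hab) hcd (Ne.symm had) hncol2
      hx3 hx4 (imz (by rw [mul_comm (d - a) (b - a)]) hx1)
    have hs2 : d = x' := hx'd.symm
    subst hs2
    refine ⟨im_swap _ _ hy2, ?_, imz (by ring) (im_swap _ _ hy4), ?_⟩
    · exact imz (by rw [show ((b - y) * (d - y) : ℂ) = (y - b) * (y - d) from by ring]; ring)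
        (onCubic a b c d y y' hab hbc hcd had hncol hy1 hy2 hy3 hy4)
    · exact imz (by rw [show ((d - y') * (b - y') : ℂ) = (y' - b) * (y' - d) from by ring]; ring)
        (onCubic a b c d y' y hab hbc hcd had hncol (imz (by ring) hy1) (imz (by ring) hy2)
          (imz (by ring) hy3) (imz (by ring) hy4))
  by_cases hxc2 : x = c
  · have hs : c = x := hxc2.symm
    subst hs
    have hx'a : x' = a := vertexconj c d a b x' hcd (Ne.symm hbc) (Ne.symm had) hab hncol3
      hx4 (imz (by rw [mul_comm (d - a) (b - a)]) hx1) hx2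
    have hs2 : a = x' := hx'a.symm
    subst hs2
    exact ⟨by simp, imz (by rw [show ((c - y) * (a - y) : ℂ) = (a - y) * (c - y) from by ring])
      (im_self ((a - y) * (c - y))), by simp, im_self ((a - y') * (c - y'))⟩
  by_cases hxd2 : x = d
  · have hs : d = x := hxd2.symm
    subst hs
    have hx'b : x' = b := vertexconj d a b c x' (Ne.symm had) (Ne.symm hcd) hab hbc hncol4
      (imz (by rw [mul_comm (d - a) (b - a)]) hx1) hx2 hx3
    have hs2 : b = x' := hx'b.symm
    subst hs2
    refine ⟨imz (by ring) (im_swap _ _ hy4), ?_, im_swap _ _ hy2, ?_⟩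
    · exact imz (by rw [show ((d - y) * (b - y) : ℂ) = (y - b) * (y - d) from by ring]; ring)
        (onCubic a b c d y y' hab hbc hcd had hncol hy1 hy2 hy3 hy4)
    · exact imz (by rw [show ((b - y') * (d - y') : ℂ) = (y' - b) * (y' - d) from by ring]; ring)
        (onCubic a b c d y' y hab hbc hcd had hncol (imz (by ring) hy1) (imz (by ring) hy2)
          (imz (by ring) hy3) (imz (by ring) hy4))
  by_cases hya2 : y = a
  · have hs : a = y := hya2.symm
    subst hs
    have hy'c : y' = c := vertexconj a b c d y' hab had hbc hcd hncol hy2 hy3 hy4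
    have hs2 : c = y' := hy'c.symm
    subst hs2
    exact ⟨im_self ((a - x) * (c - x)), by simp, im_self ((a - x') * (c - x')), by simp⟩
  by_cases hyb2 : y = b
  · have hs : b = y := hyb2.symm
    subst hs
    have hy'd : y' = d := vertexconj b c d a y' hbc (Ne.symm hab) hcd (Ne.symm had) hncol2
      hy3 hy4 (imz (by rw [mul_comm (d - a) (b - a)]) hy1)
    have hs2 : d = y' := hy'd.symm
    subst hs2
    refine ⟨?_, im_swap _ _ hx2, ?_, imz (by rw [mul_comm (x' - d) (x - d)]; ring) (im_swap _ _ hx4)⟩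
    · exact imz (by rw [show ((b - x) * (d - x) : ℂ) = (x - b) * (x - d) from by ring]; ring)
        (onCubic a b c d x x' hab hbc hcd had hncol hx1 hx2 hx3 hx4)
    · exact imz (by rw [show ((b - x') * (d - x') : ℂ) = (x' - b) * (x' - d) from by ring]; ring)
        (onCubic a b c d x' x hab hbc hcd had hncol (imz (by ring) hx1) (imz (by ring) hx2)
          (imz (by ring) hx3) (imz (by ring) hx4))
  by_cases hyc2 : y = c
  · have hs : c = y := hyc2.symm
    subst hs
    have hy'a : y' = a := vertexconj c d a b y' hcd (Ne.symm hbc) (Ne.symm had) hab hncol3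
      hy4 (imz (by rw [mul_comm (d - a) (b - a)]) hy1) hy2
    have hs2 : a = y' := hy'a.symm
    subst hs2
    exact ⟨imz (by rw [show ((c - x) * (a - x) : ℂ) = (a - x) * (c - x) from by ring])
      (im_self ((a - x) * (c - x))), by simp,
      imz (by rw [show ((c - x') * (a - x') : ℂ) = (a - x') * (c - x') from by ring])
      (im_self ((a - x') * (c - x'))), by simp⟩
  by_cases hyd2 : y = d
  · have hs : d = y := hyd2.symm
    subst hs
    have hy'b : y' = b := vertexconj d a b c y' (Ne.symm had) (Ne.symm hcd) hab hbc hncol4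
      (imz (by rw [mul_comm (d - a) (b - a)]) hy1) hy2 hy3
    have hs2 : b = y' := hy'b.symm
    subst hs2
    refine ⟨?_, imz (by ring) (im_swap _ _ hx4), ?_,
      imz (by rw [mul_comm (x' - b) (x - b)]) (im_swap _ _ hx2)⟩
    · exact imz (by rw [show ((d - x) * (b - x) : ℂ) = (x - b) * (x - d) from by ring]; ring)
        (onCubic a b c d x x' hab hbc hcd had hncol hx1 hx2 hx3 hx4)
    · exact imz (by rw [show ((d - x') * (b - x') : ℂ) = (x' - b) * (x' - d) from by ring]; ring)
        (onCubic a b c d x' x hab hbc hcd had hncol (imz (by ring) hx1) (imz (by ring) hx2)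
          (imz (by ring) hx3) (imz (by ring) hx4))
  have hCx := onCubic a b c d x x' hab hbc hcd had hncol hx1 hx2 hx3 hx4
  have hCx' := onCubic a b c d x' x hab hbc hcd had hncol (imz (by ring) hx1)
    (imz (by ring) hx2) (imz (by ring) hx3) (imz (by ring) hx4)
  have hCy := onCubic a b c d y y' hab hbc hcd had hncol hy1 hy2 hy3 hy4
  have hCy' := onCubic a b c d y' y hab hbc hcd had hncol (imz (by ring) hy1)
    (imz (by ring) hy2) (imz (by ring) hy3) (imz (by ring) hy4)
  exact ⟨key a b c d y y' x hab hbc hcd had hncol hya2 hyb2 hyc2 hyd2 hy1 hy2 hy3 hy4 hCy hCx,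
    key a b c d x x' y hab hbc hcd had hncol hxa2 hxb2 hxc2 hxd2 hx1 hx2 hx3 hx4 hCx hCy,
    key a b c d y y' x' hab hbc hcd had hncol hya2 hyb2 hyc2 hyd2 hy1 hy2 hy3 hy4 hCy hCx',
    imz (by rw [mul_comm (x' - y') (x - y')])
      (key a b c d x x' y' hab hbc hcd had hncol hxa2 hxb2 hxc2 hxd2 hx1 hx2 hx3 hx4 hCx hCy')⟩
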